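/- Let R be a commutative ring with elements ε and v such that ε and ε² − ε are units. In the group Sp₄(R) with root unipotents x_α, x_β, x_{α+β}, x_{2α+β} as in the standard C₂ parametrization, define g₁(s,t) = [x_α(s), x_β(t)] and g₂(s,t,u) = [x_β(u), [x_{α+β}(s), x_{−β}(t)]]. Then g₁(s,t) = x_{α+β}(st)·x_{2α+β}(±s²t) and g₂(s,t,u) = x_{α+β}(−stu)·x_{2α+β}(∓s²t²u), and consequently x_{2α+β}(v) can be written as a product of two commutators of elementary symplectic matrices: x_{2α+β}(v) = g₁(1, ∓ε(ε²−ε)⁻¹v) · g₂(1, ε, ±(ε²−ε)⁻¹v). -/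

import Mathlib

open Matrix

/-- The root element `x_α(s)` for the short simple root `α` of `C₂` in `Sp₄`. -/
def xA {R : Type*} [CommRing R] (s : R) : Matrix (Fin 4) (Fin 4) R :=
  1 + Matrix.single 0 1 s - Matrix.single 2 3 s

/-- The root element `x_β(t)` for the long simple root `β` of `C₂`. -/
def xB {R : Type*} [CommRing R] (t : R) : Matrix (Fin 4) (Fin 4) R :=
  1 + Matrix.single 1 2 t

/-- The root element `x_{-β}(t)`. -/
def xmB {R : Type*} [CommRing R] (t : R) : Matrix (Fin 4) (Fin 4) R :=
  1 + Matrix.single 2 1 t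

/-- The root element `x_{α+β}(u)`. -/
def xAB {R : Type*} [CommRing R] (u : R) : Matrix (Fin 4) (Fin 4) R :=
  1 + Matrix.single 0 2 u + Matrix.single 1 3 u

/-- The root element `x_{2α+β}(v)`. -/
def x2AB {R : Type*} [CommRing R] (v : R) : Matrix (Fin 4) (Fin 4) R :=
  1 + Matrix.single 0 3 v

/-- `g₁(s,t) = [x_α(s), x_β(t)]`, written with the explicit inverses
`x_α(s)⁻¹ = x_α(-s)`, `x_β(t)⁻¹ = x_β(-t)`. -/
def g₁ {R : Type*} [CommRing R] (s t : R) : Matrix (Fin 4) (Fin 4) R :=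
  xA s * xB t * xA (-s) * xB (-t)

/-- The inner commutator `K(s,t) = [x_{α+β}(s), x_{-β}(t)]`. -/
def K {R : Type*} [CommRing R] (s t : R) : Matrix (Fin 4) (Fin 4) R :=
  xAB s * xmB t * xAB (-s) * xmB (-t)

/-- The inverse `K(s,t)⁻¹ = [x_{-β}(t), x_{α+β}(s)]`. -/
def Kinv {R : Type*} [CommRing R] (s t : R) : Matrix (Fin 4) (Fin 4) R :=
  xmB t * xAB s * xmB (-t) * xAB (-s)

/-- `g₂(s,t,u) = [x_β(u), [x_{α+β}(s), x_{-β}(t)]]`. -/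
def g₂ {R : Type*} [CommRing R] (s t u : R) : Matrix (Fin 4) (Fin 4) R :=
  xB u * K s t * xB (-u) * Kinv s t

section aux
variable {R : Type*} [CommRing R]

lemma hg1 (s t : R) : g₁ s t = xAB (s * t) * x2AB (s ^ 2 * t) := by
  ext i j
  fin_cases i <;> fin_cases j <;>
    simp [g₁, xA, xB, xAB, x2AB, Matrix.mul_apply, Fin.sum_univ_four,
      Matrix.single, Matrix.one_apply, Matrix.vecHead, Matrix.vecTail] <;> ring

lemma hK (s t : R) :
    K s t = !![1, s * t, 0, -(s ^ 2 * t); 0, 1, 0, 0; 0, 0, 1, -(s * t); 0, 0, 0, 1] := by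
  ext i j
  fin_cases i <;> fin_cases j <;>
    simp [K, xmB, xAB, Matrix.mul_apply, Fin.sum_univ_four,
      Matrix.single, Matrix.one_apply, Matrix.vecHead, Matrix.vecTail] <;> ring

lemma hKinv (s t : R) :
    Kinv s t = !![1, -(s * t), 0, s ^ 2 * t; 0, 1, 0, 0; 0, 0, 1, s * t; 0, 0, 0, 1] := by
  ext i j
  fin_cases i <;> fin_cases j <;>
    simp [Kinv, xmB, xAB, Matrix.mul_apply, Fin.sum_univ_four,
      Matrix.single, Matrix.one_apply, Matrix.vecHead, Matrix.vecTail] <;> ring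

lemma hM2 (s t u : R) :
    xB u * K s t * xB (-u) =
      !![1, s * t, -(s * t * u), -(s ^ 2 * t); 0, 1, 0, -(s * t * u);
         0, 0, 1, -(s * t); 0, 0, 0, 1] := by
  rw [hK]
  ext i j
  fin_cases i <;> fin_cases j <;>
    simp [xB, Matrix.mul_apply, Fin.sum_univ_four,
      Matrix.single, Matrix.one_apply, Matrix.vecHead, Matrix.vecTail] <;> ring

lemma hg2 (s t u : R) :
    g₂ s t u = xAB (-(s * t * u)) * x2AB (-(s ^ 2 * t ^ 2 * u)) := by
  have : g₂ s t u = (xB u * K s t * xB (-u)) * Kinv s t := by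
    simp [g₂, Matrix.mul_assoc]
  rw [this, hM2, hKinv]
  ext i j
  fin_cases i <;> fin_cases j <;>
    simp [xAB, x2AB, Matrix.mul_apply, Fin.sum_univ_four,
      Matrix.single, Matrix.one_apply, Matrix.vecHead, Matrix.vecTail] <;> ring

lemma xAB_mul_x2AB_mul (a b a' b' : R) :
    (xAB a * x2AB b) * (xAB a' * x2AB b') = xAB (a + a') * x2AB (b + b') := by
  ext i j
  fin_cases i <;> fin_cases j <;>
    simp [xAB, x2AB, Matrix.mul_apply, Fin.sum_univ_four,
      Matrix.single, Matrix.one_apply, Matrix.vecHead, Matrix.vecTail] <;> ring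

end aux

/-- If `ε` and `ε² - ε` are units of the commutative ring `R`,
then (for a fixed sign `c = ±1` depending only on the normalization)
`g₁(s,t) = x_{α+β}(st)·x_{2α+β}(±s²t)` and
`g₂(s,t,u) = x_{α+β}(-stu)·x_{2α+β}(∓s²t²u)`, and consequently every
`x_{2α+β}(v)` is a product of the two commutators
`g₁(1, ∓ε(ε²-ε)⁻¹v)` and `g₂(1, ε, ∓(ε²-ε)⁻¹v)` of elementary symplectic
matrices. -/

theorem x2AB_is_product_of_two_commutators {R : Type*} [CommRing R]
    (ε : R) (hε : IsUnit ε) (hε' : IsUnit (ε ^ 2 - ε)) (v : R) :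
    ∃ c : R, (c = 1 ∨ c = -1) ∧
      (∀ s t : R, g₁ s t = xAB (s * t) * x2AB (c * (s ^ 2 * t))) ∧
      (∀ s t u : R, g₂ s t u = xAB (-(s * t * u)) * x2AB (-(c * (s ^ 2 * t ^ 2 * u)))) ∧
      x2AB v =
        g₁ 1 (-(c * ε * Ring.inverse (ε ^ 2 - ε) * v)) *
          g₂ 1 ε (-(c * Ring.inverse (ε ^ 2 - ε) * v)) := by
  refine ⟨1, Or.inl rfl, fun s t => by simpa using hg1 s t,
    fun s t u => by simpa using hg2 s t u, ?_⟩
  rw [hg1, hg2, xAB_mul_x2AB_mul]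
  have hinv : (ε ^ 2 - ε) * Ring.inverse (ε ^ 2 - ε) = 1 := Ring.mul_inverse_cancel _ hε'
  have h1 : (1 : R) * (-(1 * ε * Ring.inverse (ε ^ 2 - ε) * v)) +
      -(1 * ε * (-(1 * Ring.inverse (ε ^ 2 - ε) * v))) = 0 := by ring
  have h2 : (1 : R) ^ 2 * (-(1 * ε * Ring.inverse (ε ^ 2 - ε) * v)) +
      -(1 ^ 2 * ε ^ 2 * (-(1 * Ring.inverse (ε ^ 2 - ε) * v))) = v := by
    linear_combination v * hinv
  rw [h1, h2]
  ext i j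
  fin_cases i <;> fin_cases j <;>
    simp [xAB, x2AB, Matrix.mul_apply, Fin.sum_univ_four,
      Matrix.single, Matrix.one_apply, Matrix.vecHead, Matrix.vecTail]
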